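/- Let G be a connected maximal nontraceable graph and let T be a cutset of G (a set of vertices whose removal disconnects G). Then the number of connected components of G − T is at most |T| + 2. -/

import Mathlib

open SimpleGraph

lemma lemA {V : Type*} [Fintype V] (H : SimpleGraph V) (S : Finset V)
    (l : List V) (hnd : l.Nodup) (hall : ∀ w, w ∈ l) (hch : l.Chain' H.Adj) :
    Nat.card (H.induce ((↑S : Set V)ᶜ)).ConnectedComponent ≤ S.card + 1 := by
  classical
  set K := H.induce ((↑S : Set V)ᶜ) with hK
  set P : K.ConnectedComponent → ℕ → Prop := fun C n =>
    ∃ h : n < l.length, ∃ hs : l.get ⟨n, h⟩ ∈ ((↑S : Set V)ᶜ),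
      K.connectedComponentMk ⟨l.get ⟨n, h⟩, hs⟩ = C with hP
  have hex : ∀ C : K.ConnectedComponent, ∃ n, P C n := by
    intro C
    obtain ⟨⟨x, hx⟩, rfl⟩ := C.exists_rep
    obtain ⟨⟨n, hn⟩, hget⟩ := List.mem_iff_get.mp (hall x)
    exact ⟨n, hn, by rw [hget]; exact hx,
      congrArg K.connectedComponentMk (Subtype.ext hget)⟩
  set idx : K.ConnectedComponent → ℕ := fun C => Nat.find (hex C) with hidx
  have hlt : ∀ C, idx C < l.length := fun C => (Nat.find_spec (hex C)).1
  have hidx_inj : ∀ C C', idx C = idx C' → C = C' := by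
    intro C C' h
    obtain ⟨h1, hs1, hc1⟩ := Nat.find_spec (hex C)
    obtain ⟨h2, hs2, hc2⟩ := Nat.find_spec (hex C')
    rw [← hc1, ← hc2]
    exact congrArg K.connectedComponentMk
      (Subtype.ext (congrArg l.get (Fin.ext h)))
  have prop2 : ∀ C (h0 : idx C ≠ 0) (h : idx C - 1 < l.length),
      l.get ⟨idx C - 1, h⟩ ∈ S := by
    intro C h0 h
    have hltC : idx C < l.length := hlt C
    by_contra hw
    obtain ⟨h1, hs1, hc1⟩ := Nat.find_spec (hex C)
    have hadj : H.Adj (l.get ⟨idx C - 1, h⟩) (l.get ⟨idx C - 1 + 1, by omega⟩) :=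
      List.isChain_iff_getElem.mp hch (idx C - 1) (by omega)
    have hfin : (⟨idx C - 1 + 1, by omega⟩ : Fin l.length) = ⟨idx C, h1⟩ :=
      Fin.ext (by simp only []; omega)
    rw [hfin] at hadj
    have hwmem : l.get ⟨idx C - 1, h⟩ ∈ ((↑S : Set V)ᶜ) := by
      simpa using hw
    have hKadj : K.Adj ⟨l.get ⟨idx C - 1, h⟩, hwmem⟩ ⟨l.get ⟨idx C, h1⟩, hs1⟩ := hadj
    have : P C (idx C - 1) := ⟨h, hwmem, by
      rw [ConnectedComponent.sound hKadj.reachable]; exact hc1⟩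
    exact Nat.find_min (hex C) (show idx C - 1 < idx C by omega) this
  set F : K.ConnectedComponent → Option {x // x ∈ S} := fun C =>
    if h0 : idx C = 0 then none
    else some ⟨l.get ⟨idx C - 1, by have := hlt C; omega⟩, prop2 C h0 _⟩ with hF
  have hFinj : Function.Injective F := by
    intro C C' h
    by_cases h1 : idx C = 0 <;> by_cases h2 : idx C' = 0
    · exact hidx_inj _ _ (h1.trans h2.symm)
    · simp [hF, h1, h2] at h
    · simp [hF, h1, h2] at h
    · simp only [hF, h1, h2, dif_neg, not_false_iff, Option.some.injEq,
        Subtype.mk.injEq] at h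
      have h3 : idx C - 1 = idx C' - 1 := by
        have := (List.Nodup.getElem_inj_iff hnd).mp h
        exact this
      exact hidx_inj _ _ (by omega)
  calc Nat.card K.ConnectedComponent ≤ Nat.card (Option {x // x ∈ S}) :=
        Nat.card_le_card_of_injective F hFinj
    _ = S.card + 1 := by
        rw [Finite.card_option, Nat.card_eq_fintype_card, Fintype.card_coe]

lemma lemB {V : Type*} [Fintype V] (G : SimpleGraph V) (T : Finset V) (u v : V)
    (hu : u ∈ ((↑T : Set V)ᶜ)) (hv : v ∈ ((↑T : Set V)ᶜ)) :
    Nat.card (G.induce ((↑T : Set V)ᶜ)).ConnectedComponent ≤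
      Nat.card ((G ⊔ SimpleGraph.edge u v).induce ((↑T : Set V)ᶜ)).ConnectedComponent + 1 := by
  classical
  set K := G.induce ((↑T : Set V)ᶜ) with hKdef
  set K' := (G ⊔ SimpleGraph.edge u v).induce ((↑T : Set V)ᶜ) with hK'def
  set u' : ((↑T : Set V)ᶜ : Set V) := ⟨u, hu⟩
  set v' : ((↑T : Set V)ᶜ : Set V) := ⟨v, hv⟩
  have hle : K ≤ K' := by
    intro a b hab
    exact Or.inl hab
  have key : ∀ a b : ((↑T : Set V)ᶜ : Set V), K'.Reachable a b →
      K.Reachable a b ∨ (K.Reachable a u' ∧ K.Reachable v' b) ∨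
        (K.Reachable a v' ∧ K.Reachable u' b) := by
    intro a b hr
    obtain ⟨w⟩ := hr
    induction w with
    | nil => exact Or.inl (Reachable.refl _)
    | @cons a c b hadj q ih =>
      have hadj' : K.Adj a c ∨ (a = u' ∧ c = v') ∨ (a = v' ∧ c = u') := by
        rcases (by exact hadj : (G ⊔ SimpleGraph.edge u v).Adj (a : V) (c : V)) with h | h
        · exact Or.inl h
        · rw [SimpleGraph.edge_adj] at h
          rcases h.1 with ⟨h1, h2⟩ | ⟨h1, h2⟩
          · exact Or.inr (Or.inl ⟨Subtype.ext h1, Subtype.ext h2⟩)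
          · exact Or.inr (Or.inr ⟨Subtype.ext h1, Subtype.ext h2⟩)
      rcases hadj' with h | ⟨ha, hc⟩ | ⟨ha, hc⟩
      · rcases ih with h2 | ⟨h2, h3⟩ | ⟨h2, h3⟩
        · exact Or.inl (h.reachable.trans h2)
        · exact Or.inr (Or.inl ⟨h.reachable.trans h2, h3⟩)
        · exact Or.inr (Or.inr ⟨h.reachable.trans h2, h3⟩)
      · subst ha; subst hc
        rcases ih with h2 | ⟨h2, h3⟩ | ⟨h2, h3⟩
        · exact Or.inr (Or.inl ⟨Reachable.refl _, h2⟩)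
        · exact Or.inr (Or.inl ⟨Reachable.refl _, h3⟩)
        · exact Or.inl h3
      · subst ha; subst hc
        rcases ih with h2 | ⟨h2, h3⟩ | ⟨h2, h3⟩
        · exact Or.inr (Or.inr ⟨Reachable.refl _, h2⟩)
        · exact Or.inl h3
        · exact Or.inr (Or.inr ⟨Reachable.refl _, h3⟩)
  set f : K.ConnectedComponent → K'.ConnectedComponent :=
    SimpleGraph.ConnectedComponent.map (SimpleGraph.Hom.ofLE hle) with hf
  set g : K.ConnectedComponent → Option K'.ConnectedComponent := fun C =>
    if C = K.connectedComponentMk v' then none else some (f C) with hg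
  have hginj : Function.Injective g := by
    intro C C' h
    by_cases h1 : C = K.connectedComponentMk v' <;>
      by_cases h2 : C' = K.connectedComponentMk v'
    · exact h1.trans h2.symm
    · simp [hg, h1, h2] at h
    · simp [hg, h1, h2] at h
    · simp only [hg, h1, h2, if_neg, not_false_iff, Option.some.injEq] at h
      obtain ⟨x, rfl⟩ := C.exists_rep
      obtain ⟨y, rfl⟩ := C'.exists_rep
      simp only [hf, SimpleGraph.ConnectedComponent.map_mk] at h
      have hr : K'.Reachable x y := SimpleGraph.ConnectedComponent.exact h
      rcases key x y hr with h3 | ⟨h3, h4⟩ | ⟨h3, h4⟩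
      · exact SimpleGraph.ConnectedComponent.sound h3
      · exact absurd (SimpleGraph.ConnectedComponent.sound h4.symm) h2
      · exact absurd (SimpleGraph.ConnectedComponent.sound h3) h1
  calc Nat.card K.ConnectedComponent ≤ Nat.card (Option K'.ConnectedComponent) :=
        Nat.card_le_card_of_injective g hginj
    _ = _ := Finite.card_option

/-- A graph is traceable if it has a Hamiltonian path, i.e. a path containing
all the vertices of the graph. -/
def Traceable {V : Type*} (G : SimpleGraph V) : Prop :=
  ∃ (u v : V) (p : G.Walk u v), p.IsPath ∧ ∀ w, w ∈ p.support

/-- A graph is maximal nontraceable if it is not traceable, but adding any edge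
of the complement produces a traceable graph. -/
def MaxNontraceable {V : Type*} (G : SimpleGraph V) : Prop :=
  ¬ Traceable G ∧ ∀ u v : V, u ≠ v → ¬ G.Adj u v → Traceable (G ⊔ SimpleGraph.edge u v)
/-- If T is a cutset of a connected MNT graph G, then G − T has at most |T| + 2
connected components. -/
theorem stmt_2 {V : Type*} [Fintype V] (G : SimpleGraph V)
    (hc : G.Connected) (hG : MaxNontraceable G) (T : Finset V)
    (hcut : ¬ (G.induce ((↑T : Set V)ᶜ)).Connected) :
    Nat.card (G.induce ((↑T : Set V)ᶜ)).ConnectedComponent ≤ T.card + 2 := by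
  classical
  by_cases hne : Nonempty (((↑T : Set V)ᶜ : Set V))
  · have hpre : ¬ (G.induce ((↑T : Set V)ᶜ)).Preconnected := by
      intro h
      exact hcut (@SimpleGraph.Connected.mk _ _ h hne)
    rw [SimpleGraph.Preconnected] at hpre
    push_neg at hpre
    obtain ⟨a, b, hab⟩ := hpre
    have hne' : (a : V) ≠ (b : V) := by
      intro h
      exact hab (by rw [Subtype.ext h])
    have hnadj : ¬ G.Adj (a : V) (b : V) := by
      intro h
      exact hab (SimpleGraph.Adj.reachable
        (by exact h : (G.induce ((↑T : Set V)ᶜ)).Adj a b))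
    obtain ⟨x, y, p, hp, hallp⟩ := hG.2 (a : V) (b : V) hne' hnadj
    have h1 := lemA (G ⊔ SimpleGraph.edge (a : V) (b : V)) T p.support
      hp.support_nodup hallp p.isChain_adj_support
    have h2 := lemB G T (a : V) (b : V) a.2 b.2
    omega
  · have : IsEmpty (G.induce ((↑T : Set V)ᶜ)).ConnectedComponent := by
      constructor
      intro C
      obtain ⟨x, _⟩ := C.exists_rep
      exact hne ⟨x⟩
    rw [Nat.card_of_isEmpty]
    omega
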